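/- arXiv:2112.08742 — 4 statements merged into one kernel-verified Lean document; each statement's English description precedes it below -/
import Mathlib

section
/- Let α₁, α₂, α₃, β₁, β₂, β₃ be real numbers with α₁ > 0, α₃ > 0, α₁α₃ − α₂² = 0, and suppose the scenario-A1 sign conditions hold: β₁ ≤ 0, β₃ ≤ 0 and β₁β₃ − β₂² ≤ 0. Assume ρ := α₁β₃ + α₃β₁ − 2α₂β₂ > 0. Then for every real k with k > max{−β₁/α₁, −β₃/α₃, (β₂² − β₁β₃)/ρ}, the 2×2 real symmetric matrix k·!![α₁, α₂; α₂, α₃] + !![β₁, β₂; β₂, β₃] is positive definite. -/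
theorem stmt_0 (α₁ α₂ α₃ β₁ β₂ β₃ : ℝ)
    (hα₁ : 0 < α₁) (hα₃ : 0 < α₃) (hαdet : α₁ * α₃ - α₂ ^ 2 = 0)
    (hβ₁ : β₁ ≤ 0) (hβ₃ : β₃ ≤ 0) (hβdet : β₁ * β₃ - β₂ ^ 2 ≤ 0)
    (hρ : 0 < α₁ * β₃ + α₃ * β₁ - 2 * α₂ * β₂) :
    ∀ k : ℝ,
      max (max (-β₁ / α₁) (-β₃ / α₃))
          ((β₂ ^ 2 - β₁ * β₃) / (α₁ * β₃ + α₃ * β₁ - 2 * α₂ * β₂)) < k →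
      (k • !![α₁, α₂; α₂, α₃] + !![β₁, β₂; β₂, β₃]).PosDef := by
  intro k hk
  have h1 : -β₁ / α₁ < k := lt_of_le_of_lt (le_trans (le_max_left _ _) (le_max_left _ _)) hk
  have h3 : -β₃ / α₃ < k := lt_of_le_of_lt (le_trans (le_max_right _ _) (le_max_left _ _)) hk
  have h2 : (β₂ ^ 2 - β₁ * β₃) / (α₁ * β₃ + α₃ * β₁ - 2 * α₂ * β₂) < k :=
    lt_of_le_of_lt (le_max_right _ _) hk
  have ha : 0 < k * α₁ + β₁ := by
    have := (div_lt_iff₀ hα₁).mp h1; nlinarith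
  have hd : 0 < (k * α₁ + β₁) * (k * α₃ + β₃) - (k * α₂ + β₂) ^ 2 := by
    have h2' := (div_lt_iff₀ hρ).mp h2
    have hk2 : k^2*(α₁*α₃-α₂^2) = 0 := by rw [hαdet]; ring
    nlinarith
  refine Matrix.PosDef.of_dotProduct_mulVec_pos ?_ ?_
  · ext i j
    fin_cases i <;> fin_cases j <;> simp [Matrix.conjTranspose, Matrix.transpose]
  · intro x hx
    have hx' : x 0 ≠ 0 ∨ x 1 ≠ 0 := by
      by_contra h
      push_neg at h
      exact hx (funext fun i => by fin_cases i <;> simp [h.1, h.2])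
    simp only [dotProduct, Matrix.mulVec, Fin.sum_univ_two, Matrix.smul_apply,
      Matrix.add_apply, smul_eq_mul, Pi.star_apply, star_trivial]
    norm_num [Matrix.cons_val_zero, Matrix.cons_val_one, Matrix.head_cons]
    set a := k * α₁ + β₁
    set b := k * α₂ + β₂
    set c := k * α₃ + β₃
    have hc : 0 < c := by nlinarith [sq_nonneg b]
    rcases hx' with h | h
    · nlinarith [sq_nonneg (b * x 0 + c * x 1), mul_pos hd (sq_pos_of_ne_zero h)]
    · nlinarith [sq_nonneg (a * x 0 + b * x 1), mul_pos hd (sq_pos_of_ne_zero h)]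
end

section
/- Let α₁, α₂, α₃, β₁, β₂, β₃ be real numbers with α₁ > 0, α₃ > 0, α₁α₃ − α₂² = 0, and suppose the scenario-A2 sign conditions hold: β₁ ≥ 0, β₃ ≥ 0 and β₁β₃ − β₂² ≤ 0. Assume ρ := α₁β₃ + α₃β₁ − 2α₂β₂ > 0. Then for every real k with k > (β₂² − β₁β₃)/ρ, the 2×2 real symmetric matrix k·!![α₁, α₂; α₂, α₃] + !![β₁, β₂; β₂, β₃] is positive definite. -/
theorem stmt_1 (α₁ α₂ α₃ β₁ β₂ β₃ : ℝ)
    (hα₁ : 0 < α₁) (hα₃ : 0 < α₃) (hαdet : α₁ * α₃ - α₂ ^ 2 = 0)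
    (hβ₁ : 0 ≤ β₁) (hβ₃ : 0 ≤ β₃) (hβdet : β₁ * β₃ - β₂ ^ 2 ≤ 0)
    (hρ : 0 < α₁ * β₃ + α₃ * β₁ - 2 * α₂ * β₂) :
    ∀ k : ℝ,
      (β₂ ^ 2 - β₁ * β₃) / (α₁ * β₃ + α₃ * β₁ - 2 * α₂ * β₂) < k →
      (k • !![α₁, α₂; α₂, α₃] + !![β₁, β₂; β₂, β₃]).PosDef := by
  intro k hk
  have hkρ : β₂ ^ 2 - β₁ * β₃ < k * (α₁ * β₃ + α₃ * β₁ - 2 * α₂ * β₂) := by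
    rw [div_lt_iff₀ hρ] at hk; linarith
  have hk0 : 0 < k := by
    rcases lt_or_ge 0 k with h | h
    · exact h
    · nlinarith
  have hdet : 0 < (k * α₁ + β₁) * (k * α₃ + β₃) - (k * α₂ + β₂) ^ 2 := by
    have e : (k * α₁ + β₁) * (k * α₃ + β₃) - (k * α₂ + β₂) ^ 2 =
        k ^ 2 * (α₁ * α₃ - α₂ ^ 2) + k * (α₁ * β₃ + α₃ * β₁ - 2 * α₂ * β₂) +
        (β₁ * β₃ - β₂ ^ 2) := by ring
    rw [e, hαdet]
    nlinarith
  have ha : 0 < k * α₁ + β₁ := by positivity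
  rw [Matrix.posDef_iff_dotProduct_mulVec]
  constructor
  · ext i j
    fin_cases i <;> fin_cases j <;>
      simp [Matrix.conjTranspose_apply, Matrix.add_apply, Matrix.smul_apply]
  · intro x hx
    have h01 : x 0 ≠ 0 ∨ x 1 ≠ 0 := by
      by_contra h
      push_neg at h
      exact hx (funext fun i => by fin_cases i <;> simp [h.1, h.2])
    simp only [dotProduct, Matrix.mulVec, Matrix.add_apply, Matrix.smul_apply,
      Fin.sum_univ_two, Matrix.cons_val', Matrix.cons_val_zero, Matrix.cons_val_one,
      Matrix.head_cons, Matrix.empty_val', Matrix.cons_val_fin_one, Matrix.head_fin_const,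
      Matrix.of_apply, smul_eq_mul, RCLike.re_to_real, star_trivial, Pi.star_apply]
    set u := x 0
    set v := x 1
    have key : 0 < ((k * α₁ + β₁) * u + (k * α₂ + β₂) * v) ^ 2 +
        ((k * α₁ + β₁) * (k * α₃ + β₃) - (k * α₂ + β₂) ^ 2) * v ^ 2 := by
      rcases h01 with h | h
      · rcases eq_or_ne v 0 with hv | hv
        · simp [hv]
          positivity
        · positivity
      · positivity
    nlinarith [sq_nonneg u, sq_nonneg v]
end

section
/- Let α₁, α₂, α₃, β₁, β₂, β₃ be real numbers with α₁ > 0, α₃ > 0, α₁α₃ − α₂² = 0, and suppose the scenario-A3 sign condition holds: β₁β₃ ≤ 0. Assume ρ := α₁β₃ + α₃β₁ − 2α₂β₂ > 0. Then for every real k with k > max{−β₁/α₁, −β₃/α₃, (β₂² − β₁β₃)/ρ}, the 2×2 real symmetric matrix k·!![α₁, α₂; α₂, α₃] + !![β₁, β₂; β₂, β₃] is positive definite. -/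
lemma posdef2 (a b d : ℝ) (ha : 0 < a) (hdet : 0 < a * d - b ^ 2) :
    (!![a, b; b, d]).PosDef := by
  rw [Matrix.posDef_iff_dotProduct_mulVec]
  constructor
  · unfold Matrix.IsHermitian
    ext i j
    fin_cases i <;> fin_cases j <;> simp [Matrix.conjTranspose_apply]
  · intro x hx
    have key : dotProduct (star x) (!![a, b; b, d].mulVec x) =
        a * x 0 ^ 2 + 2 * b * x 0 * x 1 + d * x 1 ^ 2 := by
      simp [dotProduct, Matrix.mulVec, Fin.sum_univ_two]; ring
    rw [key]
    rcases eq_or_ne (x 1) 0 with h | h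
    · have h0 : x 0 ≠ 0 := by
        intro h0; exact hx (funext fun i => by fin_cases i <;> simp [h0, h])
      have h2 := sq_pos_of_ne_zero h0
      rw [h]
      nlinarith
    · nlinarith [sq_nonneg (a * x 0 + b * x 1), sq_pos_of_ne_zero h]

theorem stmt_2 (α₁ α₂ α₃ β₁ β₂ β₃ : ℝ)
    (hα₁ : 0 < α₁) (hα₃ : 0 < α₃) (hαdet : α₁ * α₃ - α₂ ^ 2 = 0)
    (hβ : β₁ * β₃ ≤ 0)
    (hρ : 0 < α₁ * β₃ + α₃ * β₁ - 2 * α₂ * β₂) :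
    ∀ k : ℝ,
      max (max (-β₁ / α₁) (-β₃ / α₃))
          ((β₂ ^ 2 - β₁ * β₃) / (α₁ * β₃ + α₃ * β₁ - 2 * α₂ * β₂)) < k →
      (k • !![α₁, α₂; α₂, α₃] + !![β₁, β₂; β₂, β₃]).PosDef := by
  intro k hk
  have h1 : -β₁ / α₁ < k := lt_of_le_of_lt (le_max_left _ _) (lt_of_le_of_lt (le_max_left _ _) hk)
  have h3 : (β₂ ^ 2 - β₁ * β₃) / (α₁ * β₃ + α₃ * β₁ - 2 * α₂ * β₂) < k :=
    lt_of_le_of_lt (le_max_right _ _) hk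
  have ha : 0 < k * α₁ + β₁ := by
    have := (div_lt_iff₀ hα₁).mp h1; nlinarith
  have hd : 0 < (k * α₁ + β₁) * (k * α₃ + β₃) - (k * α₂ + β₂) ^ 2 := by
    have h4 := (div_lt_iff₀ hρ).mp h3
    have h5 : k ^ 2 * (α₁ * α₃ - α₂ ^ 2) = 0 := by rw [hαdet]; ring
    nlinarith [h4, h5]
  have heq : k • !![α₁, α₂; α₂, α₃] + !![β₁, β₂; β₂, β₃] =
      !![k * α₁ + β₁, k * α₂ + β₂; k * α₂ + β₂, k * α₃ + β₃] := by
    ext i j; fin_cases i <;> fin_cases j <;> simp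
  rw [heq]
  exact posdef2 _ _ _ ha hd
end

section
/- Fix real numbers x_d, y_d, z_d, m, g, k₁, k₂ with m > 0, g > 0, y_d < 0, k₁ > 0, k₂ > 0. Define V_dh : ℝ³ → ℝ by V_dh(x, y, z) = (k₁/2)(x − x_d)² + (k₂/2)(y² + z² − y_d²)². Then (i) the Hessian matrix of V_dh at the point (x_d, y_d, 0) equals the diagonal matrix diag(k₁, 4k₂y_d², 0); and (ii) the 3×3 matrix diag(k₁, 4k₂y_d², 0) + diag(0, 0, −m·g·y_d/(y_d² + z_d²)) is positive definite. -/
set_option maxHeartbeats 1000000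

theorem stmt_9 (xd yd zd m g k₁ k₂ : ℝ)
    (hm : 0 < m) (hg : 0 < g) (hyd : yd < 0) (hk₁ : 0 < k₁) (hk₂ : 0 < k₂)
    (Vdh : (Fin 3 → ℝ) → ℝ)
    (hVdh : Vdh = fun q =>
      k₁ / 2 * (q 0 - xd) ^ 2 + k₂ / 2 * ((q 1) ^ 2 + (q 2) ^ 2 - yd ^ 2) ^ 2)
    (qd : Fin 3 → ℝ) (hqd : qd = ![xd, yd, 0]) :
    (∀ i j : Fin 3,
      iteratedFDeriv ℝ 2 Vdh qd ![Pi.single i 1, Pi.single j 1] =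
        Matrix.diagonal ![k₁, 4 * k₂ * yd ^ 2, 0] i j) ∧
    (Matrix.diagonal ![k₁, 4 * k₂ * yd ^ 2, 0] +
      Matrix.diagonal ![0, 0, -(m * g * yd) / (yd ^ 2 + zd ^ 2)]).PosDef := by
  constructor
  · subst hVdh hqd
    set e : Fin 3 → ((Fin 3 → ℝ) →L[ℝ] ℝ) := fun i => ContinuousLinearMap.proj i with he
    have hp : ∀ (i : Fin 3) (q : Fin 3 → ℝ),
        HasFDerivAt (fun q : Fin 3 → ℝ => q i) (e i) q :=
      fun i q => (e i).hasFDerivAt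
    set F : (Fin 3 → ℝ) → ((Fin 3 → ℝ) →L[ℝ] ℝ) := fun q =>
      (k₁ * (q 0 - xd)) • e 0 +
      (2 * k₂ * (q 1 * q 1 + q 2 * q 2 - yd * yd) * q 1) • e 1 +
      (2 * k₂ * (q 1 * q 1 + q 2 * q 2 - yd * yd) * q 2) • e 2 with hFdef
    have hF : ∀ q, HasFDerivAt
        (fun q : Fin 3 → ℝ =>
          k₁ / 2 * (q 0 - xd) ^ 2 + k₂ / 2 * ((q 1) ^ 2 + (q 2) ^ 2 - yd ^ 2) ^ 2)
        (F q) q := by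
      intro q
      simp only [pow_two]
      have h0 := (hp 0 q).sub_const xd
      have hA := (h0.mul h0).const_mul (k₁ / 2)
      have hu := (((hp 1 q).mul (hp 1 q)).add ((hp 2 q).mul (hp 2 q))).sub_const (yd * yd)
      have hB := (hu.mul hu).const_mul (k₂ / 2)
      refine (hA.add hB).congr_fderiv ?_
      ext v
      simp [hFdef, he]
      ring
    have hfd : fderiv ℝ
        (fun q : Fin 3 → ℝ =>
          k₁ / 2 * (q 0 - xd) ^ 2 + k₂ / 2 * ((q 1) ^ 2 + (q 2) ^ 2 - yd ^ 2) ^ 2) = F :=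
      funext fun q => (hF q).fderiv
    set qd : Fin 3 → ℝ := ![xd, yd, 0] with hqd
    have hu := (((hp 1 qd).mul (hp 1 qd)).add ((hp 2 qd).mul (hp 2 qd))).sub_const (yd * yd)
    have hc0 := ((hp 0 qd).sub_const xd).const_mul k₁
    have hc1 := (hu.const_mul (2 * k₂)).mul (hp 1 qd)
    have hc2 := (hu.const_mul (2 * k₂)).mul (hp 2 qd)
    have hG := ((hc0.smul_const (e 0)).add (hc1.smul_const (e 1))).add
      (hc2.smul_const (e 2))
    have hGc : HasFDerivAt F
        (k₁ • ((e 0).smulRight (e 0)) + (4 * k₂ * yd ^ 2) • ((e 1).smulRight (e 1))) qd := by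
      refine hG.congr_fderiv ?_
      ext v w
      simp [he, hqd, smul_eq_mul]
      ring
    intro i j
    rw [iteratedFDeriv_two_apply, hfd, hGc.fderiv]
    fin_cases i <;> fin_cases j <;>
      simp [he, Matrix.diagonal, Pi.single_apply] <;> ring
  · have hy2 : (0:ℝ) < yd ^ 2 := by nlinarith
    have h3 : (0:ℝ) < -(m * g * yd) / (yd ^ 2 + zd ^ 2) := by
      apply div_pos
      · have := mul_pos (mul_pos hm hg) (neg_pos.mpr hyd)
        nlinarith
      · nlinarith [sq_nonneg zd]
    rw [Matrix.diagonal_add]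
    refine Matrix.PosDef.diagonal ?_
    intro i
    fin_cases i <;> simp <;> nlinarith [hy2, h3, mul_pos hk₂ hy2]
end
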